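/- arXiv:cs/0410017 — 2 statements merged into one kernel-verified Lean document; each statement's English description precedes it below -/
import Mathlib

section
/- Let σ be a bi-infinite string of period N over a finite alphabet Σ, and let D_1,…,D_n be finite automata with m := max_i |S(D_i)|. Then every maximal substring σ_{a,b} of σ (maximal with respect to inclusion among substrings accepted by some D_i) has length at most m·N, unless the unique maximal substring is the whole bi-infinite string σ itself. -/
/-- A (nondeterministic) finite-state automaton with start states, final states
and a transition relation. -/
structure Auto (S A : Type) where
  start : Set S
  final : Set S
  trans : Set (S × A × S)

namespace Auto

variable {S A : Type}

/-- `Run M s w t`: there is a path through `M` from `s` to `t` labeled by `w`. -/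
inductive Run (M : Auto S A) : S → List A → S → Prop
  | nil (s : S) : Run M s [] s
  | cons {s t u : S} {a : A} {w : List A} :
      (s, a, t) ∈ M.trans → Run M t w u → Run M s (a :: w) u

/-- `M` accepts `w` if some path labeled `w` leads from a start state to a final state. -/
def Accepts (M : Auto S A) (w : List A) : Prop :=
  ∃ s t, s ∈ M.start ∧ t ∈ M.final ∧ M.Run s w t

def Lang (M : Auto S A) : Set (List A) := {w | M.Accepts w}

/-- Deterministic: unique start state and the transition relation is a partial
function of (state, letter). -/
def Deterministic (M : Auto S A) : Prop :=
  (∃! s, s ∈ M.start) ∧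
    ∀ s a t t', (s, a, t) ∈ M.trans → (s, a, t') ∈ M.trans → t = t'

/-- A run exists iff there is a state-valued function tracing the path. -/
theorem run_iff (M : Auto S A) (s t : S) (w : List A) :
    M.Run s w t ↔ ∃ f : ℕ → S, f 0 = s ∧ f w.length = t ∧
      ∀ k (h : k < w.length), (f k, w.get ⟨k, h⟩, f (k+1)) ∈ M.trans := by
  constructor
  · intro h
    induction h with
    | nil s => exact ⟨fun _ => s, rfl, rfl, fun k h => absurd h (by simp)⟩
    | @cons s t u a w htr _ ih =>
      obtain ⟨f, hf0, hfl, hftr⟩ := ih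
      refine ⟨fun k => Nat.rec s (fun k _ => f k) k, rfl, hfl, ?_⟩
      intro k h
      cases k with
      | zero => simpa [hf0] using htr
      | succ k => exact hftr k (by simpa using h)
  · intro ⟨f, hf0, hfl, hftr⟩
    subst hf0
    induction w generalizing f with
    | nil => rw [show t = f 0 from hfl.symm]; exact Run.nil _
    | cons a w ih =>
      exact Run.cons (hftr 0 (by simp)) (ih (fun k => f (k+1)) hfl
        (fun k h => hftr (k+1) (by simpa using h)))

end Auto

/-- `word σ a b = σ_a σ_{a+1} ⋯ σ_b` for a bi-infinite string `σ`. -/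
def word {A : Type} (σ : ℤ → A) (a b : ℤ) : List A :=
  (List.range (b - a + 1).toNat).map fun k => σ (a + k)

lemma word_eq {A : Type} (σ : ℤ → A) (a b : ℤ) :
    word σ a b = (List.range (b - a + 1).toNat).map (fun k : ℕ => σ (a + (k : ℤ))) := by
  unfold word
  simp [List.map_flatMap]
  rw [← List.map_eq_flatMap]

lemma word_length {A : Type} (σ : ℤ → A) (a b : ℤ) :
    (word σ a b).length = (b - a + 1).toNat := by
  rw [word_eq, List.length_map, List.length_range]

lemma word_get {A : Type} (σ : ℤ → A) (a b : ℤ) (k : ℕ) (h : k < (word σ a b).length) :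
    (word σ a b).get ⟨k, h⟩ = σ (a + k) := by
  simp only [List.get_eq_getElem, word_eq, List.getElem_map, List.getElem_range]

/-- pumping-style bound on maximal substrings.
If `σ` is a bi-infinite string of period `N` and `m` bounds the number of states of
each automaton `D i`, then every maximal substring `σ_{a,b}` of `σ` (maximal with
respect to inclusion among the finite substrings accepted by some `D i`) has length
at most `m·N` — unless every finite substring of `σ` is accepted, i.e. the unique
maximal substring is the whole bi-infinite string `σ` itself. -/
theorem stmt0 {A : Type} (σ : ℤ → A) (N : ℕ) (hN : 0 < N)
    (hper : ∀ i : ℤ, σ (i + (N : ℤ)) = σ i)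
    (n : ℕ) (S : Fin n → Type) [∀ i, Fintype (S i)]
    (D : ∀ i, Auto (S i) A) (m : ℕ)
    (hm : ∀ i, Fintype.card (S i) ≤ m)
    (Accepted : ℤ → ℤ → Prop)
    (hAcc : ∀ a b, Accepted a b ↔ a ≤ b ∧ ∃ i, (D i).Accepts (word σ a b)) :
    (∀ a b : ℤ, Accepted a b →
        (∀ a' b', Accepted a' b' → a' ≤ a → b ≤ b' → a' = a ∧ b' = b) →
        b - a + 1 ≤ (m : ℤ) * N) ∨
      (∀ a b : ℤ, a ≤ b → Accepted a b) := by
  have hper' : ∀ (x : ℤ) (j : ℕ), σ (x + (j * N : ℕ)) = σ x := by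
    intro x j
    induction j with
    | zero => simp
    | succ j ih =>
      have h1 : x + (((j+1) * N : ℕ) : ℤ) = (x + ((j * N : ℕ) : ℤ)) + (N : ℤ) := by
        push_cast; ring
      rw [h1, hper, ih]
  left
  intro a b hacc hmax
  by_contra hlen
  push_neg at hlen
  obtain ⟨hab, i, s, t, hs, ht, hrun⟩ := (hAcc a b).1 hacc
  set L : ℕ := (b - a + 1).toNat with hLdef
  have hL : (L : ℤ) = b - a + 1 := Int.toNat_of_nonneg (by omega)
  have hwlen : (word σ a b).length = L := word_length σ a b
  obtain ⟨f, hf0, hfl, hftr⟩ := (Auto.run_iff (D i) s t (word σ a b)).1 hrun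
  have hmNL : m * N < L := by
    have h2 : (m : ℤ) * N < (L : ℤ) := by rw [hL]; exact hlen
    exact_mod_cast h2
  have hcard : Fintype.card (S i) < Fintype.card (Fin (m + 1)) := by
    rw [Fintype.card_fin]; exact Nat.lt_succ_of_le (hm i)
  obtain ⟨p, q, hpq, hfeq⟩ :=
    Fintype.exists_ne_map_eq_of_card_lt (fun k : Fin (m+1) => f (k.val * N)) hcard
  wlog hpq' : p.val < q.val generalizing p q with H
  · refine H q p hpq.symm hfeq.symm ?_
    refine lt_of_le_of_ne (Nat.not_lt.mp hpq') (fun hh => hpq (Fin.ext hh.symm))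
  -- positions c < e where the run revisits a state, with e - c a multiple of N
  have hce : p.val * N < q.val * N := by
    exact Nat.mul_lt_mul_of_lt_of_le hpq' (le_refl N) hN
  set c : ℕ := p.val * N with hcdef
  set e : ℕ := q.val * N with hedef
  set d : ℕ := e - c with hddef
  have hdpos : 0 < d := by omega
  have hd : d = (q.val - p.val) * N := by rw [hddef, hcdef, hedef, Nat.sub_mul]
  have heL : e ≤ L := by
    have h3 : q.val * N ≤ m * N := Nat.mul_le_mul_right N (Nat.lt_succ_iff.mp q.isLt)
    omega
  have hperd : ∀ x : ℤ, σ (x + (d : ℤ)) = σ x := by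
    intro x
    have := hper' x (q.val - p.val)
    rwa [← hd] at this
  -- the transitions of the original run, in terms of σ
  have key : ∀ j, j < L → (f j, σ (a + j), f (j+1)) ∈ (D i).trans := by
    intro j hj
    have h4 := hftr j (by rw [hwlen]; exact hj)
    rwa [word_get] at h4
  -- a pumped run for the longer word `word σ a (b + d)`
  have hL' : (word σ a (b + d)).length = L + d := by
    rw [word_length]; omega
  have hrun' : (D i).Run s (word σ a (b + d)) t := by
    rw [Auto.run_iff]
    refine ⟨fun k => if k < e then f k else f (k - d), ?_, ?_, ?_⟩
    · simp only [show (0:ℕ) < e by omega, if_pos]; exact hf0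
    · rw [hL']
      simp only [if_neg (by omega : ¬ L + d < e)]
      rw [show L + d - d = L from by omega, ← hwlen]
      exact hfl
    · intro k h
      have hk' : k < L + d := by rwa [hL'] at h
      rw [word_get]
      by_cases hk : k < e
      · have hkL : k < L := by omega
        simp only [if_pos hk]
        by_cases hk1 : k + 1 < e
        · simp only [if_pos hk1]
          exact key k hkL
        · have h5 : f (k + 1 - d) = f (k + 1) := by
            rw [show k + 1 - d = c from by omega, hfeq, show e = k + 1 from by omega]
          simp only [if_neg hk1, h5]
          exact key k hkL
      · have hek : e ≤ k := by omega
        simp only [if_neg hk, if_neg (by omega : ¬ k + 1 < e)]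
        rw [show k + 1 - d = (k - d) + 1 from by omega]
        have hσ : σ (a + (k : ℤ)) = σ (a + ((k - d : ℕ) : ℤ)) := by
          rw [show a + (k : ℤ) = (a + ((k - d : ℕ) : ℤ)) + (d : ℤ) from by omega]
          exact hperd _
        rw [hσ]
        exact key (k - d) (by omega)
  -- hence `Accepted a (b + d)`, contradicting maximality
  have hacc' : Accepted a (b + d) := by
    rw [hAcc]
    exact ⟨by omega, i, s, t, hs, ht, hrun'⟩
  have := hmax a (b + d) hacc' le_rfl (by omega)
  omega
end

section
/- Let D be a finite automaton and for each state s let Γ(s) be a finite partition of Σ* into regular languages. Then there exists a finite refinement Γ''(s) of each Γ(s), common across states, that is compatible with D's transition structure: whenever (s, a, s') ∈ T(D) and E ∈ Γ''(s), there is a unique E' ∈ Γ''(s') with Lang(E)·a ⊆ Lang(E'). In particular, the iterative refinement algorithm (repeatedly disjoining the families {(E·a) ∩ E' : E ∈ Γ(s), E' ∈ Γ(s')} over transitions) terminates, producing the coarsest such compatible refinement. -/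
section Stmt17Aux

variable {S A : Type} (D : Auto S A) (Γ : S → Finset (Set (List A)))

/-- The coarsest compatible refinement as an equivalence relation. -/
def stmt17Eqv (s : S) (u v : List A) : Prop :=
  ∀ t (w : List A), D.Run s w t → ∀ E0 ∈ Γ t, (u ++ w ∈ E0 ↔ v ++ w ∈ E0)

lemma stmt17Eqv.refl (s : S) (u : List A) : stmt17Eqv D Γ s u u :=
  fun _ _ _ _ _ => Iff.rfl

lemma stmt17Eqv.symm {s : S} {u v : List A} (h : stmt17Eqv D Γ s u v) :
    stmt17Eqv D Γ s v u := fun t w r E0 hE0 => (h t w r E0 hE0).symm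

lemma stmt17Eqv.trans {s : S} {u v x : List A} (h : stmt17Eqv D Γ s u v)
    (h' : stmt17Eqv D Γ s v x) : stmt17Eqv D Γ s u x :=
  fun t w r E0 hE0 => (h t w r E0 hE0).trans (h' t w r E0 hE0)

/-- Equivalence class of `u`. -/
def stmt17Cls (s : S) (u : List A) : Set (List A) := {v | stmt17Eqv D Γ s u v}

lemma stmt17Cls_self (s : S) (u : List A) : u ∈ stmt17Cls D Γ s u :=
  stmt17Eqv.refl D Γ s u

lemma stmt17Cls_eq {s : S} {u v : List A} (h : stmt17Eqv D Γ s u v) :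
    stmt17Cls D Γ s u = stmt17Cls D Γ s v := by
  ext x
  exact ⟨fun hx => stmt17Eqv.trans D Γ (stmt17Eqv.symm D Γ h) hx, fun hx => stmt17Eqv.trans D Γ h hx⟩

end Stmt17Aux

/-- existence and coarseness of the optimized refinement.
Let `D` be a finite automaton and `Γ s` a finite partition of `Σ*` into regular
languages for each state `s`. Then there are finite refinements `Γ'' s` of the
`Γ s`, still partitions of `Σ*` into (nonempty) regular languages, compatible with
`D`'s transition structure: whenever `(s, a, s') ∈ T(D)` and `E ∈ Γ'' s`, there is a
unique `E' ∈ Γ'' s'` with `E·a ⊆ E'`. Moreover `Γ''` can be chosen coarsest: every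
family `Δ` with these properties refines it. (Hence the iterative refinement
algorithm terminates, producing this coarsest compatible refinement.) -/
theorem stmt17 {S A : Type} [Fintype S] (D : Auto S A)
    (Γ : S → Finset (Set (List A)))
    (hreg : ∀ s, ∀ E ∈ Γ s, Language.IsRegular (E : Language A))
    (hcover : ∀ s, (⋃ E ∈ Γ s, E) = Set.univ)
    (hdisj : ∀ s, ∀ E ∈ Γ s, ∀ E' ∈ Γ s, E ≠ E' → E ∩ E' = ∅) :
    ∃ Γ'' : S → Finset (Set (List A)),
      (∀ s, ∀ E ∈ Γ'' s, Set.Nonempty E) ∧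
      (∀ s, (⋃ E ∈ Γ'' s, E) = Set.univ) ∧
      (∀ s, ∀ E ∈ Γ'' s, ∀ E' ∈ Γ'' s, E ≠ E' → E ∩ E' = ∅) ∧
      (∀ s, ∀ E ∈ Γ'' s, Language.IsRegular (E : Language A)) ∧
      (∀ s, ∀ E ∈ Γ'' s, ∃ E0 ∈ Γ s, E ⊆ E0) ∧
      (∀ s a s', (s, a, s') ∈ D.trans → ∀ E ∈ Γ'' s,
        ∃! E', E' ∈ Γ'' s' ∧ ((· ++ [a]) '' E) ⊆ E') ∧
      (∀ Δ : S → Finset (Set (List A)),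
        (∀ s, ∀ E ∈ Δ s, Set.Nonempty E) →
        (∀ s, (⋃ E ∈ Δ s, E) = Set.univ) →
        (∀ s, ∀ E ∈ Δ s, ∀ E' ∈ Δ s, E ≠ E' → E ∩ E' = ∅) →
        (∀ s, ∀ E ∈ Δ s, ∃ E0 ∈ Γ s, E ⊆ E0) →
        (∀ s a s', (s, a, s') ∈ D.trans → ∀ E ∈ Δ s,
          ∃! E', E' ∈ Δ s' ∧ ((· ++ [a]) '' E) ⊆ E') →
        ∀ s, ∀ E ∈ Δ s, ∃ E'' ∈ Γ'' s, E ⊆ E'') := by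
  classical
  set allE : Finset (Set (List A)) := Finset.univ.biUnion Γ with hallE
  have hregAll : ∀ E0 : allE, Language.IsRegular (E0.1 : Language A) := by
    rintro ⟨E0, hE0⟩
    obtain ⟨s, -, hs⟩ := Finset.mem_biUnion.mp hE0
    exact hreg s E0 hs
  choose σf instf Mf hMf using hregAll
  haveI : ∀ E0 : allE, Fintype (σf E0) := instf
  let Profile := ∀ E0 : allE, σf E0
  haveI : Fintype Profile := by unfold Profile; infer_instance
  let prof : List A → Profile := fun u E0 => (Mf E0).eval u
  -- profile equality implies equivalence at every state
  have key : ∀ u v : List A, prof u = prof v → ∀ s, stmt17Eqv D Γ s u v := by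
    intro u v hp s t w _ E0 hE0
    have hE0' : E0 ∈ allE := Finset.mem_biUnion.mpr ⟨t, Finset.mem_univ t, hE0⟩
    have hm : ∀ x : List A, x ∈ E0 ↔ (Mf ⟨E0, hE0'⟩).eval x ∈ (Mf ⟨E0, hE0'⟩).accept := by
      intro x
      rw [← DFA.mem_accepts, hMf ⟨E0, hE0'⟩]
      exact Iff.rfl
    have h2 : (Mf ⟨E0, hE0'⟩).eval u = (Mf ⟨E0, hE0'⟩).eval v := congrFun hp ⟨E0, hE0'⟩
    rw [hm (u ++ w), hm (v ++ w)]
    show (Mf ⟨E0, hE0'⟩).evalFrom (Mf ⟨E0, hE0'⟩).start (u ++ w) ∈ _ ↔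
      (Mf ⟨E0, hE0'⟩).evalFrom (Mf ⟨E0, hE0'⟩).start (v ++ w) ∈ _
    rw [DFA.evalFrom_of_append, DFA.evalFrom_of_append]
    show (Mf ⟨E0, hE0'⟩).evalFrom ((Mf ⟨E0, hE0'⟩).eval u) w ∈ _ ↔
      (Mf ⟨E0, hE0'⟩).evalFrom ((Mf ⟨E0, hE0'⟩).eval v) w ∈ _
    rw [h2]
  -- pick representatives of profiles to get finiteness
  let pick : Profile → List A := fun p => if h : ∃ u, prof u = p then h.choose else []
  have hpick : ∀ s (u : List A), stmt17Cls D Γ s u = stmt17Cls D Γ s (pick (prof u)) := by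
    intro s u
    have hex : ∃ x, prof x = prof u := ⟨u, rfl⟩
    have : prof (pick (prof u)) = prof u := by
      simpa only [pick, dif_pos hex] using hex.choose_spec
    exact stmt17Cls_eq D Γ (key u _ this.symm s)
  have hfin : ∀ s, (Set.range (stmt17Cls D Γ s)).Finite := by
    intro s
    apply Set.Finite.subset (Set.finite_range fun p : Profile => stmt17Cls D Γ s (pick p))
    rintro _ ⟨u, rfl⟩
    exact ⟨prof u, (hpick s u).symm⟩
  refine ⟨fun s => (hfin s).toFinset, ?_, ?_, ?_, ?_, ?_, ?_, ?_⟩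
  -- 1: nonempty
  · intro s E hE
    obtain ⟨u, rfl⟩ := (Set.Finite.mem_toFinset _).mp hE
    exact ⟨u, stmt17Cls_self D Γ s u⟩
  -- 2: cover
  · intro s
    apply Set.eq_univ_iff_forall.mpr
    intro v
    exact Set.mem_iUnion₂.mpr ⟨stmt17Cls D Γ s v,
      (Set.Finite.mem_toFinset _).mpr ⟨v, rfl⟩, stmt17Cls_self D Γ s v⟩
  -- 3: disjoint
  · intro s E hE E' hE' hne
    obtain ⟨u, rfl⟩ := (Set.Finite.mem_toFinset _).mp hE
    obtain ⟨u', rfl⟩ := (Set.Finite.mem_toFinset _).mp hE'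
    apply Set.eq_empty_iff_forall_notMem.mpr
    rintro x ⟨hx, hx'⟩
    exact hne ((stmt17Cls_eq D Γ hx).trans (stmt17Cls_eq D Γ hx').symm)
  -- 4: regular
  · intro s E hE
    obtain ⟨u, rfl⟩ := (Set.Finite.mem_toFinset _).mp hE
    refine ⟨Profile, inferInstance,
      ⟨fun p a E0 => (Mf E0).step (p E0) a, fun E0 => (Mf E0).start,
        prof '' stmt17Cls D Γ s u⟩, ?_⟩
    set bigM : DFA A Profile :=
      ⟨fun p a E0 => (Mf E0).step (p E0) a, fun E0 => (Mf E0).start,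
        prof '' stmt17Cls D Γ s u⟩ with hbigM
    have hev : ∀ (v : List A) (p : Profile),
        bigM.evalFrom p v = fun E0 => (Mf E0).evalFrom (p E0) v := by
      intro v
      induction v with
      | nil => intro p; rfl
      | cons a w ih =>
        intro p
        show bigM.evalFrom (bigM.step p a) w = _
        rw [ih]
        rfl
    have heval : ∀ v : List A, bigM.eval v = prof v := by
      intro v
      show bigM.evalFrom bigM.start v = prof v
      rw [hev]
      rfl
    ext v
    rw [DFA.mem_accepts, heval]
    constructor
    · rintro ⟨v', hv', hpv⟩
      exact stmt17Eqv.trans D Γ hv' (key v' v hpv s)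
    · intro hv
      exact ⟨v, hv, rfl⟩
  -- 5: refines Γ
  · intro s E hE
    obtain ⟨u, rfl⟩ := (Set.Finite.mem_toFinset _).mp hE
    have hu : u ∈ ⋃ E0 ∈ Γ s, E0 := by rw [hcover s]; trivial
    obtain ⟨E0, hE0, huE0⟩ := Set.mem_iUnion₂.mp hu
    refine ⟨E0, hE0, ?_⟩
    intro v hv
    have := hv s [] (Auto.Run.nil s) E0 hE0
    simpa using this.mp (by simpa using huE0)
  -- 6: compatibility
  · intro s a s' htr E hE
    obtain ⟨u, rfl⟩ := (Set.Finite.mem_toFinset _).mp hE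
    have hsub : ((· ++ [a]) '' stmt17Cls D Γ s u) ⊆ stmt17Cls D Γ s' (u ++ [a]) := by
      rintro _ ⟨v, hv, rfl⟩
      intro t w hrun E0 hE0
      have := hv t (a :: w) (Auto.Run.cons htr hrun) E0 hE0
      simpa [List.append_assoc] using this
    refine ⟨stmt17Cls D Γ s' (u ++ [a]),
      ⟨(Set.Finite.mem_toFinset _).mpr ⟨u ++ [a], rfl⟩, hsub⟩, ?_⟩
    rintro E'' ⟨hE''mem, hsub''⟩
    obtain ⟨x, rfl⟩ := (Set.Finite.mem_toFinset _).mp hE''mem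
    have hx : u ++ [a] ∈ stmt17Cls D Γ s' x :=
      hsub'' ⟨u, stmt17Cls_self D Γ s u, rfl⟩
    exact stmt17Cls_eq D Γ hx
  -- 7: coarsest
  · intro Δ hΔne hΔcov hΔdis hΔref hΔcomp s E hE
    obtain ⟨u, hu⟩ := hΔne s E hE
    refine ⟨stmt17Cls D Γ s u, (Set.Finite.mem_toFinset _).mpr ⟨u, rfl⟩, ?_⟩
    have main : ∀ {s t : S} {w : List A}, D.Run s w t →
        ∀ E ∈ Δ s, ∀ x y : List A, x ∈ E → y ∈ E →
        ∃ F ∈ Δ t, x ++ w ∈ F ∧ y ++ w ∈ F := by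
      intro s t w hrun
      induction hrun with
      | nil s =>
        intro E hE x y hx hy
        exact ⟨E, hE, by simpa using hx, by simpa using hy⟩
      | cons htr hrun ih =>
        rename_i s1 t1 u1 a w1
        intro E hE x y hx hy
        obtain ⟨E', ⟨hE'mem, hE'sub⟩, -⟩ := hΔcomp _ _ _ htr E hE
        obtain ⟨F, hF, h1, h2⟩ := ih E' hE'mem (x ++ [a]) (y ++ [a])
          (hE'sub ⟨x, hx, rfl⟩) (hE'sub ⟨y, hy, rfl⟩)
        exact ⟨F, hF, by simpa [List.append_assoc] using h1,
          by simpa [List.append_assoc] using h2⟩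
    intro v hv
    intro t w hrun E0 hE0
    obtain ⟨F, hF, h1, h2⟩ := main hrun E hE u v hu hv
    obtain ⟨E0', hE0', hFsub⟩ := hΔref t F hF
    by_cases hEq : E0 = E0'
    · subst hEq
      exact ⟨fun _ => hFsub h2, fun _ => hFsub h1⟩
    · have hd : E0' ∩ E0 = ∅ := hdisj t E0' hE0' E0 hE0 (Ne.symm hEq)
      constructor
      · intro h
        exact absurd (Set.mem_inter (hFsub h1) h) (by rw [hd]; exact fun hc => hc)
      · intro h
        exact absurd (Set.mem_inter (hFsub h2) h) (by rw [hd]; exact fun hc => hc)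
end
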